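/- arXiv:2601.09383 — 2 statements merged into one kernel-verified Lean document; each statement's English description precedes it below -/
import Mathlib

section
/- Let 0 < γ < δ be real parameters and define ℓ : ℝ → ℝ by: ℓ(φ) = δ[γ²/(δ−γ) + (φ+γ)·(−γ(−γ+2δ))/(δ−γ)²] for φ ≤ −γ; ℓ(φ) = δ φ²/(φ+δ) for −γ < φ < 0; and ℓ(φ) = 0 for φ ≥ 0. Then ℓ is continuously differentiable on all of ℝ, convex, nonnegative, and nonincreasing. -/
/-- Properties of the limiter function (equation (20)): for `0 < γ < δ`, the piecewise
function `ℓ` defined by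
`ℓ(φ) = δ[γ²/(δ-γ) + (φ+γ)(-γ(-γ+2δ))/(δ-γ)²]` for `φ ≤ -γ`,
`ℓ(φ) = δφ²/(φ+δ)` for `-γ < φ < 0`, and `ℓ(φ) = 0` for `φ ≥ 0`,
is continuously differentiable on all of `ℝ`, convex, nonnegative, and nonincreasing. -/
theorem stmt_14 (γ δ : ℝ) (hγ : 0 < γ) (hγδ : γ < δ) (ℓ : ℝ → ℝ)
    (hℓ : ∀ φ : ℝ, ℓ φ =
      if φ ≤ -γ then
        δ * (γ^2 / (δ - γ) + (φ + γ) * (-γ * (-γ + 2*δ)) / (δ - γ)^2)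
      else if φ < 0 then
        δ * φ^2 / (φ + δ)
      else 0) :
    ContDiff ℝ 1 ℓ ∧ ConvexOn ℝ Set.univ ℓ ∧ (∀ x, 0 ≤ ℓ x) ∧ Antitone ℓ := by
  have hδ : 0 < δ := hγ.trans hγδ
  have hdg : 0 < δ - γ := by linarith
  set m : ℝ → ℝ := fun y => δ * y^2 / (y + δ) with hm_def
  set g : ℝ → ℝ := fun x => min 0 (δ - δ^3 / (max (x + δ) (δ - γ))^2) with hg_def
  -- derivative of the middle piece
  have hm : ∀ x : ℝ, x + δ ≠ 0 → HasDerivAt m (δ - δ^3/(x+δ)^2) x := by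
    intro x hx
    have h1 : HasDerivAt (fun y : ℝ => δ * y^2) (δ * (2*x)) x := by
      have := (hasDerivAt_pow 2 x).const_mul δ
      simpa [mul_comm] using this
    have h2 : HasDerivAt (fun y : ℝ => y + δ) 1 x := (hasDerivAt_id x).add_const δ
    have h3 := h1.div h2 hx
    refine h3.congr_deriv ?_
    field_simp
    ring
  -- values of g on the three regions
  have hgL : ∀ x : ℝ, x ≤ -γ → g x = δ * (-γ * (-γ + 2*δ)) / (δ - γ)^2 := by
    intro x hx
    have h1 : max (x + δ) (δ - γ) = δ - γ := max_eq_right (by linarith)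
    have h2 : δ - δ^3/(δ - γ)^2 ≤ 0 := by
      rw [sub_nonpos, le_div_iff₀ (by positivity)]
      nlinarith [mul_pos (mul_pos hδ hγ) (show (0:ℝ) < 2*δ - γ by linarith)]
    have h3 : δ - δ^3/(δ - γ)^2 = δ * (-γ * (-γ + 2*δ)) / (δ - γ)^2 := by
      field_simp
      ring
    simp only [hg_def, h1]
    rw [min_eq_right h2, h3]
  have hgM : ∀ x : ℝ, -γ ≤ x → x ≤ 0 → g x = δ - δ^3/(x+δ)^2 := by
    intro x hx hx0
    have h1 : max (x + δ) (δ - γ) = x + δ := max_eq_left (by linarith)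
    have h2 : δ - δ^3/(x+δ)^2 ≤ 0 := by
      rw [sub_nonpos, le_div_iff₀ (by nlinarith)]
      nlinarith [mul_nonneg (mul_nonneg hδ.le (show (0:ℝ) ≤ -x by linarith))
        (show (0:ℝ) ≤ x + 2*δ by linarith)]
    simp only [hg_def, h1]
    rw [min_eq_right h2]
  have hgR : ∀ x : ℝ, 0 ≤ x → g x = 0 := by
    intro x hx
    have h1 : max (x + δ) (δ - γ) = x + δ := max_eq_left (by linarith)
    have h2 : (0:ℝ) ≤ δ - δ^3/(x+δ)^2 := by
      rw [sub_nonneg, div_le_iff₀ (by nlinarith)]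
      nlinarith [mul_nonneg (mul_nonneg hδ.le hx) (show (0:ℝ) ≤ x + 2*δ by linarith)]
    simp only [hg_def, h1]
    rw [min_eq_left h2]
  have hg0 : ∀ x, g x ≤ 0 := fun x => min_le_left _ _
  -- value agreement at the gluing points
  have hval1 : ℓ (-γ) = m (-γ) := by
    rw [hℓ]
    simp only [le_refl, if_pos, hm_def]
    have : -γ + δ ≠ 0 := by linarith
    field_simp
    ring
  have hval2 : ℓ 0 = m 0 := by
    rw [hℓ]
    have h1 : ¬ ((0:ℝ) ≤ -γ) := by linarith
    simp [h1, hm_def]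
  -- the linear left piece
  have hL : ∀ x : ℝ, HasDerivAt
      (fun φ : ℝ => δ * (γ^2 / (δ - γ) + (φ + γ) * (-γ * (-γ + 2*δ)) / (δ - γ)^2))
      (δ * (-γ * (-γ + 2*δ)) / (δ - γ)^2) x := by
    intro x
    have h := ((((hasDerivAt_id x).add_const γ).mul_const (-γ * (-γ + 2*δ))).div_const
      ((δ - γ)^2)).const_add (γ^2 / (δ - γ))
    have h2 := h.const_mul δ
    refine h2.congr_deriv ?_
    ring
  -- ℓ has derivative g everywhere
  have hderiv : ∀ x : ℝ, HasDerivAt ℓ (g x) x := by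
    intro x
    rcases lt_trichotomy x (-γ) with hx | hx | hx
    · -- x < -γ : locally the linear piece
      have heq : ℓ =ᶠ[nhds x] (fun φ : ℝ =>
          δ * (γ^2 / (δ - γ) + (φ + γ) * (-γ * (-γ + 2*δ)) / (δ - γ)^2)) := by
        filter_upwards [Iio_mem_nhds hx] with y hy
        rw [hℓ, if_pos (le_of_lt (Set.mem_Iio.mp hy))]
      rw [hgL x (le_of_lt hx)]
      exact (hL x).congr_of_eventuallyEq heq
    · -- x = -γ : glue
      subst hx
      have hne : -γ + δ ≠ 0 := by linarith
      have hleft : HasDerivWithinAt ℓ (g (-γ)) (Set.Iic (-γ)) (-γ) := by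
        rw [hgL _ le_rfl]
        refine ((hL (-γ)).hasDerivWithinAt).congr ?_ ?_
        · intro y hy
          rw [hℓ, if_pos (Set.mem_Iic.mp hy)]
        · rw [hℓ, if_pos le_rfl]
      have hright : HasDerivWithinAt ℓ (g (-γ)) (Set.Ici (-γ)) (-γ) := by
        rw [hgM _ le_rfl (by linarith)]
        refine ((hm (-γ) hne).hasDerivWithinAt).congr_of_eventuallyEq ?_ hval1
        rw [Filter.EventuallyEq, eventually_nhdsWithin_iff]
        filter_upwards [Iio_mem_nhds (show -γ < (0:ℝ) by linarith)] with y hy hy'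
        rcases eq_or_lt_of_le (Set.mem_Ici.mp hy') with h | h
        · rw [← h]; exact hval1
        · rw [hℓ, if_neg (not_le.mpr h), if_pos (Set.mem_Iio.mp hy)]
      have := hleft.union hright
      rw [Set.Iic_union_Ici] at this
      exact hasDerivWithinAt_univ.mp this
    · rcases lt_trichotomy x 0 with hx0 | hx0 | hx0
      · -- -γ < x < 0 : locally the middle piece
        have heq : ℓ =ᶠ[nhds x] m := by
          filter_upwards [Ioo_mem_nhds hx hx0] with y hy
          rw [hℓ, if_neg (not_le.mpr hy.1), if_pos hy.2]
        rw [hgM x (le_of_lt hx) (le_of_lt hx0)]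
        exact (hm x (by linarith)).congr_of_eventuallyEq heq
      · -- x = 0 : glue
        subst hx0
        have hne : (0:ℝ) + δ ≠ 0 := by linarith
        have hd0 : δ - δ^3/((0:ℝ)+δ)^2 = 0 := by
          field_simp
          ring
        have hleft : HasDerivWithinAt ℓ (g 0) (Set.Iic 0) 0 := by
          rw [hgR 0 le_rfl]
          have h := ((hm 0 hne).hasDerivWithinAt (s := Set.Iic 0)).congr_of_eventuallyEq
            ?_ hval2
          · rwa [hd0] at h
          rw [Filter.EventuallyEq, eventually_nhdsWithin_iff]
          filter_upwards [Ioi_mem_nhds hx] with y hy hy'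
          have hy2 := Set.mem_Ioi.mp hy
          rcases eq_or_lt_of_le (Set.mem_Iic.mp hy') with h | h
          · rw [h]; exact hval2
          · rw [hℓ, if_neg (not_le.mpr (by linarith)), if_pos h]
        have hright : HasDerivWithinAt ℓ (g 0) (Set.Ici 0) 0 := by
          rw [hgR 0 le_rfl]
          refine ((hasDerivAt_const 0 (0:ℝ)).hasDerivWithinAt).congr ?_ ?_
          · intro y hy
            have hy2 := Set.mem_Ici.mp hy
            rw [hℓ, if_neg (by push_neg; linarith), if_neg (not_lt.mpr hy2)]
          · rw [hℓ, if_neg (by push_neg; linarith), if_neg (lt_irrefl 0)]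
        have := hleft.union hright
        rw [Set.Iic_union_Ici] at this
        exact hasDerivWithinAt_univ.mp this
      · -- 0 < x : locally 0
        have heq : ℓ =ᶠ[nhds x] (fun _ : ℝ => (0:ℝ)) := by
          filter_upwards [Ioi_mem_nhds hx0] with y hy
          have hy2 := Set.mem_Ioi.mp hy
          rw [hℓ, if_neg (by push_neg; linarith), if_neg (not_lt.mpr (le_of_lt hy2))]
        rw [hgR x (le_of_lt hx0)]
        exact (hasDerivAt_const x (0:ℝ)).congr_of_eventuallyEq heq
  have hdiff : Differentiable ℝ ℓ := fun x => (hderiv x).differentiableAt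
  have hderiv_eq : deriv ℓ = g := funext fun x => (hderiv x).deriv
  -- g is monotone
  have hmono : Monotone g := by
    intro a b hab
    have ha : (0:ℝ) < max (a + δ) (δ - γ) := lt_max_of_lt_right hdg
    have hb : (0:ℝ) < max (b + δ) (δ - γ) := lt_max_of_lt_right hdg
    have hle : max (a + δ) (δ - γ) ≤ max (b + δ) (δ - γ) :=
      max_le_max (by linarith) le_rfl
    have hdiv : δ^3 / (max (b + δ) (δ - γ))^2 ≤ δ^3 / (max (a + δ) (δ - γ))^2 := by
      apply div_le_div_of_nonneg_left (by positivity) (by positivity)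
      nlinarith
    exact min_le_min le_rfl (by linarith)
  -- g is continuous
  have hgc : Continuous g := by
    apply continuous_const.min
    apply continuous_const.sub
    apply continuous_const.div
    · fun_prop
    · intro x
      have : (0:ℝ) < max (x + δ) (δ - γ) := lt_max_of_lt_right hdg
      positivity
  refine ⟨?_, ?_, ?_, ?_⟩
  · rw [contDiff_one_iff_deriv]
    exact ⟨hdiff, hderiv_eq ▸ hgc⟩
  · exact Monotone.convexOn_univ_of_deriv hdiff (hderiv_eq ▸ hmono)
  · have hanti : Antitone ℓ := antitone_of_deriv_nonpos hdiff (fun x => hderiv_eq ▸ hg0 x)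
    intro x
    rcases le_or_gt 0 x with hx | hx
    · rw [hℓ, if_neg (by push_neg; linarith), if_neg (not_lt.mpr hx)]
    · have h0 : ℓ 0 = 0 := by
        rw [hℓ, if_neg (by push_neg; linarith), if_neg (lt_irrefl 0)]
      calc (0:ℝ) = ℓ 0 := h0.symm
        _ ≤ ℓ x := hanti (le_of_lt hx)
  · exact antitone_of_deriv_nonpos hdiff (fun x => hderiv_eq ▸ hg0 x)
end

section
/- Let Ω ⊆ ℝ^ν be a measurable set and let ρ, δ, σ, ε, τ, M, γ > 0 be constants. Let W_c : ℝ → ℝ be convex differentiable, W_e : ℝ → ℝ be concave differentiable, and W = W_c + W_e. Let φⁿ, φ^{n+1}, μ : ℝ^ν → ℝ and vⁿ, v : ℝ^ν → ℝ^ν be differentiable functions, p : ℝ^ν → ℝ a function, and D : ℝ^ν → ℝ a nonnegative function (the drag coefficient d(φ̃_fⁿ, ε)). Set ρ̃ⁿ = ρ(φⁿ + δ), ρ̃^{n+1} = ρ(φ^{n+1} + δ), φ̃^{n+1} = 2δ + (1−2δ)φ^{n+1}. Assume φⁿ ≥ −δ on Ω (so ρ̃ⁿ ≥ 0), assume all integrands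 appearing below are integrable over Ω, and assume the following five integral identities hold: (i) ∫_Ω p ∇·(φ̃^{n+1} v) dx = 0; (ii) 0 = ∫_Ω ((ρ̃ⁿ + ρ̃^{n+1})/2)((v − vⁿ)/τ)·v dx + (1/2)∫_Ω (ρ φⁿ v − ρ M ε ∇μ)·∇(vⁿ·v) dx − ∫_Ω p ∇·(φ̃^{n+1} v) dx + ∫_Ω 2γ ∇^s v : ∇v dx + ∫_Ω ρ D |v|² dx + ∫_Ω σ φⁿ v·∇μ dx; (iii) 0 = ∫_Ω σ ((φ^{n+1} − φⁿ)/τ) μ dx + ∫_Ω σ M ε |∇μ|² dx − ∫_Ω σ φⁿ v·∇μ dx; (iv) 0 = −∫_Ω μ σ (φ^{n+1} − φⁿ)/τ dx + ∫_Ω ((W_c'(φ^{n+1}) + W_e'(φⁿ))/ε) σ (φ^{n+1} − φⁿ)/τ dx + ∫_Ω ε ∇φ^{n+1} · ∇(σ(φ^{n+1} − φⁿ)/τ) dx; (v) 0 = ∫_Ω ((φ^{n+1} − φⁿ)/τ)(ρ/2) vⁿ·v dx + ∫_Ω M ε ∇μ · ∇((ρ/2) vⁿ·v) dx − ∫_Ω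 φⁿ v · ∇((ρ/2) vⁿ·v) dx. Define the discrete free energy F[φ, u] = ∫_Ω (1/2) ρ(φ + δ) |u|² + σ(W(φ)/ε + (ε/2)|∇φ|²) dx. Then (1/τ)(F[φ^{n+1}, v] − F[φⁿ, vⁿ]) ≤ −∫_Ω (2γ ∇^s v : ∇v + ρ D |v|² + σ M ε |∇μ|²) dx ≤ 0; in particular F[φ^{n+1}, v] ≤ F[φⁿ, vⁿ]. -/
open scoped RealInnerProductSpace
open MeasureTheory

/-- The divergence `∇·F(x) = Σ_i ∂_i F_i(x)` of a vector field `F : ℝ^ν → ℝ^ν`. -/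
noncomputable def ediv {ν : ℕ} (F : EuclideanSpace ℝ (Fin ν) → EuclideanSpace ℝ (Fin ν))
    (x : EuclideanSpace ℝ (Fin ν)) : ℝ :=
  ∑ i, fderiv ℝ (fun y => F y i) x (EuclideanSpace.single i 1)

/-- The Jacobian matrix `(DF(x))_{ij} = ∂_j F_i(x)` of a vector field. -/
noncomputable def jacobian {ν : ℕ} (F : EuclideanSpace ℝ (Fin ν) → EuclideanSpace ℝ (Fin ν))
    (x : EuclideanSpace ℝ (Fin ν)) (i j : Fin ν) : ℝ :=
  fderiv ℝ (fun y => F y i) x (EuclideanSpace.single j 1)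

/-- The Frobenius product `∇^s F : ∇F` of the symmetric gradient
`∇^s F = (1/2)(DF + DFᵀ)` with the Jacobian `DF`, at `x`. -/
noncomputable def symGradFrob {ν : ℕ}
    (F : EuclideanSpace ℝ (Fin ν) → EuclideanSpace ℝ (Fin ν))
    (x : EuclideanSpace ℝ (Fin ν)) : ℝ :=
  ∑ i, ∑ j, ((1/2) * (jacobian F x i j + jacobian F x j i)) * jacobian F x i j

/-- The discrete free energy
`F[φ, u] = ∫_Ω (1/2)ρ(φ+δ)|u|² + σ(W(φ)/ε + (ε/2)|∇φ|²) dx`. -/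
noncomputable def discreteFreeEnergy {ν : ℕ} (Ω : Set (EuclideanSpace ℝ (Fin ν)))
    (ρ δ σ ε : ℝ) (W : ℝ → ℝ) (φ : EuclideanSpace ℝ (Fin ν) → ℝ)
    (u : EuclideanSpace ℝ (Fin ν) → EuclideanSpace ℝ (Fin ν)) : ℝ :=
  ∫ x in Ω, ((1/2) * ρ * (φ x + δ) * ‖u x‖^2
    + σ * ((W (φ x)) / ε + (ε/2) * ‖gradient φ x‖^2))

section Helpers

open MeasureTheory

lemma symGradFrob_nonneg {ν : ℕ}
    (F : EuclideanSpace ℝ (Fin ν) → EuclideanSpace ℝ (Fin ν))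
    (x : EuclideanSpace ℝ (Fin ν)) : 0 ≤ symGradFrob F x := by
  unfold symGradFrob
  set J := jacobian F x with hJ
  have hswap : ∑ i, ∑ j, ((1/2:ℝ) * (J i j + J j i)) * J j i
      = ∑ i, ∑ j, ((1/2:ℝ) * (J i j + J j i)) * J i j := by
    rw [Finset.sum_comm]
    exact Finset.sum_congr rfl fun i _ => Finset.sum_congr rfl fun j _ => by ring
  have h2 : 2 * (∑ i, ∑ j, ((1/2:ℝ) * (J i j + J j i)) * J i j)
      = ∑ i, ∑ j, ((1/2:ℝ) * (J i j + J j i)^2) := by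
    rw [two_mul]
    nth_rewrite 1 [← hswap]
    rw [← Finset.sum_add_distrib]
    refine Finset.sum_congr rfl fun i _ => ?_
    rw [← Finset.sum_add_distrib]
    exact Finset.sum_congr rfl fun j _ => by ring
  have h3 : 0 ≤ ∑ i, ∑ j, ((1/2:ℝ) * (J i j + J j i)^2) :=
    Finset.sum_nonneg fun i _ => Finset.sum_nonneg fun j _ => by positivity
  linarith

lemma convex_tangent {f : ℝ → ℝ} (hf : ConvexOn ℝ Set.univ f) (hd : Differentiable ℝ f)
    (a b : ℝ) : deriv f a * (b - a) ≤ f b - f a := by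
  rcases lt_trichotomy a b with h | h | h
  · have hs := hf.deriv_le_slope (Set.mem_univ a) (Set.mem_univ b) h (hd a)
    rw [slope_def_field] at hs
    have hba : 0 < b - a := sub_pos.mpr h
    calc deriv f a * (b - a) ≤ ((f b - f a) / (b - a)) * (b - a) := by
          exact mul_le_mul_of_nonneg_right hs hba.le
      _ = f b - f a := by field_simp
  · subst h; simp
  · have hs := hf.slope_le_deriv (Set.mem_univ b) (Set.mem_univ a) h (hd a)
    rw [slope_def_field] at hs
    have hab : 0 < a - b := sub_pos.mpr h
    have : f a - f b ≤ deriv f a * (a - b) := by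
      calc f a - f b = ((f a - f b) / (a - b)) * (a - b) := by field_simp
        _ ≤ deriv f a * (a - b) := mul_le_mul_of_nonneg_right hs hab.le
    linarith [this]

end Helpers

set_option maxHeartbeats 1600000 in
/-- Theorem 4.1: discrete thermodynamic consistency of the fully discrete
Cahn–Hilliard Navier–Stokes scheme.  Under the tested variational identities
(i)–(v) of the scheme, the discrete free energy satisfies
`(1/τ)(F[φ^{n+1}, v] - F[φⁿ, vⁿ]) ≤ -∫_Ω (2γ∇^s v:∇v + ρD|v|² + σMε|∇μ|²) ≤ 0`,
and in particular `F[φ^{n+1}, v] ≤ F[φⁿ, vⁿ]`. -/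
theorem stmt_15 {ν : ℕ} (Ω : Set (EuclideanSpace ℝ (Fin ν))) (hΩ : MeasurableSet Ω)
    (ρ δ σ ε τ M γ : ℝ)
    (hρ : 0 < ρ) (hδ : 0 < δ) (hσ : 0 < σ) (hε : 0 < ε) (hτ : 0 < τ)
    (hM : 0 < M) (hγ : 0 < γ)
    (Wc We : ℝ → ℝ)
    (hWc_conv : ConvexOn ℝ Set.univ Wc) (hWc_diff : Differentiable ℝ Wc)
    (hWe_conc : ConcaveOn ℝ Set.univ We) (hWe_diff : Differentiable ℝ We)
    (φn φ1 μ : EuclideanSpace ℝ (Fin ν) → ℝ)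
    (p D : EuclideanSpace ℝ (Fin ν) → ℝ)
    (vn v : EuclideanSpace ℝ (Fin ν) → EuclideanSpace ℝ (Fin ν))
    (hφn : Differentiable ℝ φn) (hφ1 : Differentiable ℝ φ1)
    (hμ : Differentiable ℝ μ)
    (hvn : Differentiable ℝ vn) (hv : Differentiable ℝ v)
    (hD : ∀ x, 0 ≤ D x)
    (hφnδ : ∀ x ∈ Ω, -δ ≤ φn x)
    -- integrability of the integrands appearing below
    (hint₁ : IntegrableOn
      (fun x => p x * ediv (fun y => (2*δ + (1 - 2*δ) * φ1 y) • v y) x) Ω)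
    (hint₂ : IntegrableOn
      (fun x => ((ρ*(φn x + δ) + ρ*(φ1 x + δ))/2) * (⟪v x - vn x, v x⟫ / τ)) Ω)
    (hint₃ : IntegrableOn
      (fun x => ⟪(ρ * φn x) • v x - (ρ*M*ε) • gradient μ x,
        gradient (fun y => ⟪vn y, v y⟫) x⟫) Ω)
    (hint₄ : IntegrableOn (fun x => 2*γ*symGradFrob v x) Ω)
    (hint₅ : IntegrableOn (fun x => ρ * D x * ‖v x‖^2) Ω)
    (hint₆ : IntegrableOn (fun x => σ * φn x * ⟪v x, gradient μ x⟫) Ω)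
    (hint₇ : IntegrableOn (fun x => σ * ((φ1 x - φn x)/τ) * μ x) Ω)
    (hint₈ : IntegrableOn (fun x => σ * M * ε * ‖gradient μ x‖^2) Ω)
    (hint₉ : IntegrableOn
      (fun x => ((deriv Wc (φ1 x) + deriv We (φn x))/ε) * σ * ((φ1 x - φn x)/τ)) Ω)
    (hint₁₀ : IntegrableOn
      (fun x => ε * ⟪gradient φ1 x, gradient (fun y => σ * ((φ1 y - φn y)/τ)) x⟫) Ω)
    (hint₁₁ : IntegrableOn
      (fun x => ((φ1 x - φn x)/τ) * ((ρ/2) * ⟪vn x, v x⟫)) Ω)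
    (hint₁₂ : IntegrableOn
      (fun x => M * ε * ⟪gradient μ x, gradient (fun y => (ρ/2) * ⟪vn y, v y⟫) x⟫) Ω)
    (hint₁₃ : IntegrableOn
      (fun x => ⟪φn x • v x, gradient (fun y => (ρ/2) * ⟪vn y, v y⟫) x⟫) Ω)
    (hint₁₄ : IntegrableOn (fun x => (φn x + δ) * ‖vn x‖^2) Ω)
    (hint₁₅ : IntegrableOn (fun x => (φ1 x + δ) * ‖v x‖^2) Ω)
    (hint₁₆ : IntegrableOn (fun x => Wc (φn x) + We (φn x)) Ω)
    (hint₁₇ : IntegrableOn (fun x => Wc (φ1 x) + We (φ1 x)) Ω)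
    (hint₁₈ : IntegrableOn (fun x => ‖gradient φn x‖^2) Ω)
    (hint₁₉ : IntegrableOn (fun x => ‖gradient φ1 x‖^2) Ω)
    (hint₂₀ : IntegrableOn (fun x => (φn x + δ) * ‖v x - vn x‖^2) Ω)
    (hint₂₁ : IntegrableOn (fun x => ‖gradient φ1 x - gradient φn x‖^2) Ω)
    (hint₂₂ : IntegrableOn (fun x => (φ1 x - φn x) * ⟪vn x, v x⟫) Ω)
    -- (i) the tested incompressibility equation
    (hi : ∫ x in Ω, p x * ediv (fun y => (2*δ + (1 - 2*δ) * φ1 y) • v y) x = 0)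
    -- (ii) the momentum equation tested with v = v^{n+1}
    (hii : (0:ℝ) =
      (∫ x in Ω, ((ρ*(φn x + δ) + ρ*(φ1 x + δ))/2) * (⟪v x - vn x, v x⟫ / τ))
      + (1/2) * (∫ x in Ω, ⟪(ρ * φn x) • v x - (ρ*M*ε) • gradient μ x,
          gradient (fun y => ⟪vn y, v y⟫) x⟫)
      - (∫ x in Ω, p x * ediv (fun y => (2*δ + (1 - 2*δ) * φ1 y) • v y) x)
      + (∫ x in Ω, 2*γ*symGradFrob v x)
      + (∫ x in Ω, ρ * D x * ‖v x‖^2)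
      + (∫ x in Ω, σ * φn x * ⟪v x, gradient μ x⟫))
    -- (iii) the phase-field equation tested with σμ^{n+1}
    (hiii : (0:ℝ) =
      (∫ x in Ω, σ * ((φ1 x - φn x)/τ) * μ x)
      + (∫ x in Ω, σ * M * ε * ‖gradient μ x‖^2)
      - (∫ x in Ω, σ * φn x * ⟪v x, gradient μ x⟫))
    -- (iv) the chemical-potential equation tested with -σ(φ^{n+1}-φⁿ)/τ
    (hiv : (0:ℝ) =
      - (∫ x in Ω, μ x * σ * ((φ1 x - φn x)/τ))
      + (∫ x in Ω, ((deriv Wc (φ1 x) + deriv We (φn x))/ε) * σ * ((φ1 x - φn x)/τ))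
      + (∫ x in Ω, ε * ⟪gradient φ1 x, gradient (fun y => σ * ((φ1 y - φn y)/τ)) x⟫))
    -- (v) the phase-field equation tested with (ρ/2)vⁿ·v^{n+1}
    (hv' : (0:ℝ) =
      (∫ x in Ω, ((φ1 x - φn x)/τ) * ((ρ/2) * ⟪vn x, v x⟫))
      + (∫ x in Ω, M * ε * ⟪gradient μ x, gradient (fun y => (ρ/2) * ⟪vn y, v y⟫) x⟫)
      - (∫ x in Ω, ⟪φn x • v x, gradient (fun y => (ρ/2) * ⟪vn y, v y⟫) x⟫)) :
    (1/τ) * (discreteFreeEnergy Ω ρ δ σ ε (fun s => Wc s + We s) φ1 v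
        - discreteFreeEnergy Ω ρ δ σ ε (fun s => Wc s + We s) φn vn)
      ≤ - ∫ x in Ω,
          (2*γ*symGradFrob v x + ρ * D x * ‖v x‖^2 + σ*M*ε*‖gradient μ x‖^2) ∧
    (- ∫ x in Ω,
        (2*γ*symGradFrob v x + ρ * D x * ‖v x‖^2 + σ*M*ε*‖gradient μ x‖^2)) ≤ 0 ∧
    discreteFreeEnergy Ω ρ δ σ ε (fun s => Wc s + We s) φ1 v
      ≤ discreteFreeEnergy Ω ρ δ σ ε (fun s => Wc s + We s) φn vn := by
    -- pointwise gradient computations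
  have hgradg : ∀ x, gradient (fun y => (ρ/2) * ⟪vn y, v y⟫) x
      = (ρ/2) • gradient (fun y => ⟪vn y, v y⟫) x := by
    intro x
    unfold gradient
    rw [fderiv_const_mul ((hvn x).inner ℝ (hv x)) (ρ/2), _root_.map_smul]
  have hgradW : ∀ x, gradient (fun y => σ * ((φ1 y - φn y)/τ)) x
      = (σ/τ) • (gradient φ1 x - gradient φn x) := by
    intro x
    have h1 : (fun y => σ * ((φ1 y - φn y)/τ)) = fun y => (σ/τ) * (φ1 y - φn y) :=
      funext fun y => by ring
    unfold gradient
    rw [h1, fderiv_const_mul ((hφ1 x).fun_sub (hφn x)) (σ/τ), fderiv_fun_sub (hφ1 x) (hφn x),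
      _root_.map_smul, _root_.map_sub]
  -- (1/2)·B = E pointwise structure
  have hB : (∫ x in Ω, ⟪(ρ * φn x) • v x - (ρ*M*ε) • gradient μ x,
        gradient (fun y => ⟪vn y, v y⟫) x⟫)
      = 2 * ((∫ x in Ω, ⟪φn x • v x, gradient (fun y => (ρ/2) * ⟪vn y, v y⟫) x⟫)
        - (∫ x in Ω, M * ε * ⟪gradient μ x, gradient (fun y => (ρ/2) * ⟪vn y, v y⟫) x⟫)) := by
    rw [← integral_sub hint₁₃ hint₁₂, ← integral_const_mul]
    refine integral_congr_ae (Filter.Eventually.of_forall fun x => ?_)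
    simp only [hgradg, inner_sub_left, real_inner_smul_left, real_inner_smul_right]
    ring
  have hC : (∫ x in Ω, μ x * σ * ((φ1 x - φn x)/τ))
      = ∫ x in Ω, σ * ((φ1 x - φn x)/τ) * μ x :=
    integral_congr_ae (Filter.Eventually.of_forall fun x => by ring)
  rw [hC] at hiv
  have hsum : 0 = (∫ x in Ω, ((ρ*(φn x + δ) + ρ*(φ1 x + δ))/2) * (⟪v x - vn x, v x⟫ / τ))
      + (∫ x in Ω, ((φ1 x - φn x)/τ) * ((ρ/2) * ⟪vn x, v x⟫))
      + (∫ x in Ω, 2*γ*symGradFrob v x) + (∫ x in Ω, ρ * D x * ‖v x‖^2)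
      + (∫ x in Ω, σ * M * ε * ‖gradient μ x‖^2)
      + (∫ x in Ω, ((deriv Wc (φ1 x) + deriv We (φn x))/ε) * σ * ((φ1 x - φn x)/τ))
      + (∫ x in Ω, ε * ⟪gradient φ1 x, gradient (fun y => σ * ((φ1 y - φn y)/τ)) x⟫) := by
    linarith [hii, hiii, hiv, hv', hi, hB]
  -- kinetic energy decomposition
  have hAE : (∫ x in Ω, ((ρ*(φn x + δ) + ρ*(φ1 x + δ))/2) * (⟪v x - vn x, v x⟫ / τ))
      + (∫ x in Ω, ((φ1 x - φn x)/τ) * ((ρ/2) * ⟪vn x, v x⟫))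
      = (ρ/(2*τ)) * ((∫ x in Ω, (φ1 x + δ) * ‖v x‖^2)
          - (∫ x in Ω, (φn x + δ) * ‖vn x‖^2))
        + (ρ/(2*τ)) * (∫ x in Ω, (φn x + δ) * ‖v x - vn x‖^2) := by
    have e1 : IntegrableOn
        (fun x => (ρ/(2*τ)) * ((φ1 x + δ) * ‖v x‖^2 - (φn x + δ) * ‖vn x‖^2)) Ω :=
      (hint₁₅.sub hint₁₄).const_mul _
    have e2 : IntegrableOn (fun x => (ρ/(2*τ)) * ((φn x + δ) * ‖v x - vn x‖^2)) Ω :=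
      hint₂₀.const_mul _
    rw [← integral_add hint₂ hint₁₁, ← integral_sub hint₁₅ hint₁₄, ← integral_const_mul,
      ← integral_const_mul, ← integral_add e1 e2]
    refine integral_congr_ae (Filter.Eventually.of_forall fun x => ?_)
    dsimp only
    have h1 : ⟪v x - vn x, v x⟫ = ‖v x‖^2 - ⟪vn x, v x⟫ := by
      rw [inner_sub_left, real_inner_self_eq_norm_sq]
    have h2 : ‖v x - vn x‖^2 = ‖v x‖^2 - 2*⟪vn x, v x⟫ + ‖vn x‖^2 := by
      rw [norm_sub_sq_real, real_inner_comm]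
    rw [h1, h2]; ring
  -- gradient energy decomposition
  have hGam : (∫ x in Ω, ε * ⟪gradient φ1 x, gradient (fun y => σ * ((φ1 y - φn y)/τ)) x⟫)
      = (σ*ε/(2*τ)) * ((∫ x in Ω, ‖gradient φ1 x‖^2) - (∫ x in Ω, ‖gradient φn x‖^2))
        + (σ*ε/(2*τ)) * (∫ x in Ω, ‖gradient φ1 x - gradient φn x‖^2) := by
    have e1 : IntegrableOn
        (fun x => (σ*ε/(2*τ)) * (‖gradient φ1 x‖^2 - ‖gradient φn x‖^2)) Ω :=
      (hint₁₉.sub hint₁₈).const_mul _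
    have e2 : IntegrableOn
        (fun x => (σ*ε/(2*τ)) * ‖gradient φ1 x - gradient φn x‖^2) Ω :=
      hint₂₁.const_mul _
    rw [← integral_sub hint₁₉ hint₁₈, ← integral_const_mul, ← integral_const_mul,
      ← integral_add e1 e2]
    refine integral_congr_ae (Filter.Eventually.of_forall fun x => ?_)
    dsimp only
    have h2 : ‖gradient φ1 x - gradient φn x‖^2
        = ‖gradient φ1 x‖^2 - 2*⟪gradient φ1 x, gradient φn x⟫ + ‖gradient φn x‖^2 :=
      norm_sub_sq_real _ _
    rw [hgradW x, real_inner_smul_right, inner_sub_right, real_inner_self_eq_norm_sq, h2]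
    ring
  -- double-well potential estimate
  have hW : (σ/(ε*τ)) * ((∫ x in Ω, Wc (φ1 x) + We (φ1 x))
        - (∫ x in Ω, Wc (φn x) + We (φn x)))
      ≤ ∫ x in Ω, ((deriv Wc (φ1 x) + deriv We (φn x))/ε) * σ * ((φ1 x - φn x)/τ) := by
    have e1 : IntegrableOn
        (fun x => (σ/(ε*τ)) * ((Wc (φ1 x) + We (φ1 x)) - (Wc (φn x) + We (φn x)))) Ω :=
      (hint₁₇.sub hint₁₆).const_mul _
    rw [← integral_sub hint₁₇ hint₁₆, ← integral_const_mul]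
    refine setIntegral_mono_on e1 hint₉ hΩ fun x _ => ?_
    have hc : deriv Wc (φ1 x) * (φn x - φ1 x) ≤ Wc (φn x) - Wc (φ1 x) :=
      convex_tangent hWc_conv hWc_diff _ _
    have hneg : ConvexOn ℝ Set.univ fun s => -We s := by
      simpa [Pi.neg_def] using hWe_conc.neg
    have he : deriv (fun s => -We s) (φn x) * (φ1 x - φn x)
        ≤ (-We (φ1 x)) - (-We (φn x)) := convex_tangent hneg hWe_diff.neg _ _
    rw [deriv.fun_neg] at he
    have key : (Wc (φ1 x) + We (φ1 x)) - (Wc (φn x) + We (φn x))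
        ≤ (deriv Wc (φ1 x) + deriv We (φn x)) * (φ1 x - φn x) := by linarith
    have hpos : (0:ℝ) ≤ σ/(ε*τ) := by positivity
    calc (σ/(ε*τ)) * ((Wc (φ1 x) + We (φ1 x)) - (Wc (φn x) + We (φn x)))
        ≤ (σ/(ε*τ)) * ((deriv Wc (φ1 x) + deriv We (φn x)) * (φ1 x - φn x)) :=
          mul_le_mul_of_nonneg_left key hpos
      _ = ((deriv Wc (φ1 x) + deriv We (φn x))/ε) * σ * ((φ1 x - φn x)/τ) := by ring
  -- free energy splittings
  have hF1 : discreteFreeEnergy Ω ρ δ σ ε (fun s => Wc s + We s) φ1 v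
      = (ρ/2) * (∫ x in Ω, (φ1 x + δ) * ‖v x‖^2)
        + (σ/ε) * (∫ x in Ω, Wc (φ1 x) + We (φ1 x))
        + (σ*ε/2) * (∫ x in Ω, ‖gradient φ1 x‖^2) := by
    unfold discreteFreeEnergy
    have e1 : IntegrableOn (fun x => (ρ/2) * ((φ1 x + δ) * ‖v x‖^2)) Ω :=
      hint₁₅.const_mul _
    have e2 : IntegrableOn (fun x => (σ/ε) * (Wc (φ1 x) + We (φ1 x))) Ω :=
      hint₁₇.const_mul _
    have e3 : IntegrableOn (fun x => (σ*ε/2) * ‖gradient φ1 x‖^2) Ω :=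
      hint₁₉.const_mul _
    have e12 : IntegrableOn (fun x => (ρ/2) * ((φ1 x + δ) * ‖v x‖^2)
        + (σ/ε) * (Wc (φ1 x) + We (φ1 x))) Ω := e1.add e2
    rw [← integral_const_mul, ← integral_const_mul, ← integral_const_mul,
      ← integral_add e1 e2, ← integral_add e12 e3]
    refine integral_congr_ae (Filter.Eventually.of_forall fun x => ?_)
    dsimp only
    ring
  have hF0 : discreteFreeEnergy Ω ρ δ σ ε (fun s => Wc s + We s) φn vn
      = (ρ/2) * (∫ x in Ω, (φn x + δ) * ‖vn x‖^2)
        + (σ/ε) * (∫ x in Ω, Wc (φn x) + We (φn x))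
        + (σ*ε/2) * (∫ x in Ω, ‖gradient φn x‖^2) := by
    unfold discreteFreeEnergy
    have e1 : IntegrableOn (fun x => (ρ/2) * ((φn x + δ) * ‖vn x‖^2)) Ω :=
      hint₁₄.const_mul _
    have e2 : IntegrableOn (fun x => (σ/ε) * (Wc (φn x) + We (φn x))) Ω :=
      hint₁₆.const_mul _
    have e3 : IntegrableOn (fun x => (σ*ε/2) * ‖gradient φn x‖^2) Ω :=
      hint₁₈.const_mul _
    have e12 : IntegrableOn (fun x => (ρ/2) * ((φn x + δ) * ‖vn x‖^2)
        + (σ/ε) * (Wc (φn x) + We (φn x))) Ω := e1.add e2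
    rw [← integral_const_mul, ← integral_const_mul, ← integral_const_mul,
      ← integral_add e1 e2, ← integral_add e12 e3]
    refine integral_congr_ae (Filter.Eventually.of_forall fun x => ?_)
    dsimp only
    ring
  -- dissipation splitting and nonnegativity
  have hdiss : (∫ x in Ω,
        (2*γ*symGradFrob v x + ρ * D x * ‖v x‖^2 + σ*M*ε*‖gradient μ x‖^2))
      = (∫ x in Ω, 2*γ*symGradFrob v x) + (∫ x in Ω, ρ * D x * ‖v x‖^2)
        + (∫ x in Ω, σ*M*ε*‖gradient μ x‖^2) := by
    have e1 : IntegrableOn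
        (fun x => 2*γ*symGradFrob v x + ρ * D x * ‖v x‖^2) Ω := hint₄.add hint₅
    rw [integral_add e1 hint₈, integral_add hint₄ hint₅]
  have hDiss0 : 0 ≤ ∫ x in Ω,
      (2*γ*symGradFrob v x + ρ * D x * ‖v x‖^2 + σ*M*ε*‖gradient μ x‖^2) := by
    refine setIntegral_nonneg hΩ fun x _ => ?_
    have h1 : (0:ℝ) ≤ 2*γ*symGradFrob v x :=
      mul_nonneg (by positivity) (symGradFrob_nonneg v x)
    have h2 : (0:ℝ) ≤ ρ * D x * ‖v x‖^2 :=
      mul_nonneg (mul_nonneg hρ.le (hD x)) (sq_nonneg _)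
    have h3 : (0:ℝ) ≤ σ*M*ε*‖gradient μ x‖^2 := by positivity
    linarith
  -- nonnegative remainders
  have hJ2 : 0 ≤ ∫ x in Ω, (φn x + δ) * ‖v x - vn x‖^2 :=
    setIntegral_nonneg hΩ fun x hx =>
      mul_nonneg (by linarith [hφnδ x hx]) (sq_nonneg _)
  have hJg : 0 ≤ ∫ x in Ω, ‖gradient φ1 x - gradient φn x‖^2 :=
    setIntegral_nonneg hΩ fun x _ => sq_nonneg _
  have hJ2' : 0 ≤ (ρ/(2*τ)) * ∫ x in Ω, (φn x + δ) * ‖v x - vn x‖^2 :=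
    mul_nonneg (by positivity) hJ2
  have hJg' : 0 ≤ (σ*ε/(2*τ)) * ∫ x in Ω, ‖gradient φ1 x - gradient φn x‖^2 :=
    mul_nonneg (by positivity) hJg
  -- key identity
  have key : (1/τ) * (discreteFreeEnergy Ω ρ δ σ ε (fun s => Wc s + We s) φ1 v
        - discreteFreeEnergy Ω ρ δ σ ε (fun s => Wc s + We s) φn vn)
      = ((∫ x in Ω, ((ρ*(φn x + δ) + ρ*(φ1 x + δ))/2) * (⟪v x - vn x, v x⟫ / τ))
          + (∫ x in Ω, ((φ1 x - φn x)/τ) * ((ρ/2) * ⟪vn x, v x⟫)))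
        + (σ/(ε*τ)) * ((∫ x in Ω, Wc (φ1 x) + We (φ1 x))
            - (∫ x in Ω, Wc (φn x) + We (φn x)))
        + (∫ x in Ω, ε * ⟪gradient φ1 x, gradient (fun y => σ * ((φ1 y - φn y)/τ)) x⟫)
        - (ρ/(2*τ)) * (∫ x in Ω, (φn x + δ) * ‖v x - vn x‖^2)
        - (σ*ε/(2*τ)) * (∫ x in Ω, ‖gradient φ1 x - gradient φn x‖^2) := by
    linear_combination (1/τ) * hF1 - (1/τ) * hF0 - hAE - hGam
  have ineq1 : (1/τ) * (discreteFreeEnergy Ω ρ δ σ ε (fun s => Wc s + We s) φ1 v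
        - discreteFreeEnergy Ω ρ δ σ ε (fun s => Wc s + We s) φn vn)
      ≤ - ∫ x in Ω,
          (2*γ*symGradFrob v x + ρ * D x * ‖v x‖^2 + σ*M*ε*‖gradient μ x‖^2) := by
    rw [hdiss]
    linarith [key, hW, hJ2', hJg', hsum]
  have ineq2 : (- ∫ x in Ω,
      (2*γ*symGradFrob v x + ρ * D x * ‖v x‖^2 + σ*M*ε*‖gradient μ x‖^2)) ≤ 0 :=
    neg_nonpos.mpr hDiss0
  refine ⟨ineq1, ineq2, ?_⟩
  have h0 : (1/τ) * (discreteFreeEnergy Ω ρ δ σ ε (fun s => Wc s + We s) φ1 v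
      - discreteFreeEnergy Ω ρ δ σ ε (fun s => Wc s + We s) φn vn) ≤ 0 :=
    le_trans ineq1 ineq2
  by_contra hcon
  push_neg at hcon
  have : 0 < (1/τ) * (discreteFreeEnergy Ω ρ δ σ ε (fun s => Wc s + We s) φ1 v
      - discreteFreeEnergy Ω ρ δ σ ε (fun s => Wc s + We s) φn vn) :=
    mul_pos (by positivity) (by linarith)
  linarith
end
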